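/- arXiv:2202.06522 — 2 statements merged into one kernel-verified Lean document; each statement's English description precedes it below -/
import Mathlib

section
/- Let S be a semigroup of Hénon maps, R > R_S, and C ⊂ C² compact. Then there exists k_C ≥ 1 such that h(C) ⊆ V_R ∪ int(V_R^+) for every h ∈ G_k with k ≥ k_C, and there exists k'_C with h^{-1}(C) ⊆ V_R ∪ int(V_R^-) for every h ∈ G_k, k ≥ k'_C. -/
open Filter Metric Set Bornology

noncomputable section

/-- A generalized Hénon map of ℂ²: `H (x,y) = (y, p(y) - a x)` with `a ≠ 0` and
`deg p = d ≥ 2`. -/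
def IsGenHenonDeg (h : ℂ × ℂ → ℂ × ℂ) (d : ℕ) : Prop :=
  ∃ (a : ℂ) (p : Polynomial ℂ), a ≠ 0 ∧ 2 ≤ p.natDegree ∧ p.natDegree = d ∧
    ∀ x y : ℂ, h (x, y) = (y, p.eval y - a * x)

/-- A Hénon map of degree `d`: a finite (nonempty) composition of generalized
Hénon maps, `d` being the product of the degrees of the factors. -/
def IsHenonDeg (h : ℂ × ℂ → ℂ × ℂ) (d : ℕ) : Prop :=
  ∃ l : List ((ℂ × ℂ → ℂ × ℂ) × ℕ), l ≠ [] ∧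
    (∀ gd ∈ l, IsGenHenonDeg gd.1 gd.2) ∧
    h = (l.map Prod.fst).foldr (· ∘ ·) id ∧ d = (l.map Prod.snd).prod

def IsHenon (h : ℂ × ℂ → ℂ × ℂ) : Prop := ∃ d, IsHenonDeg h d

/-- The polydisk `V_R = {max(|x|,|y|) ≤ R}`. -/
def VR (R : ℝ) : Set (ℂ × ℂ) := {z | max ‖z.1‖ ‖z.2‖ ≤ R}

/-- `V_R^+ = {|y| ≥ max(|x|, R)}`. -/
def VRp (R : ℝ) : Set (ℂ × ℂ) := {z | max ‖z.1‖ R ≤ ‖z.2‖}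

/-- `V_R^- = {|x| ≥ max(|y|, R)}`. -/
def VRm (R : ℝ) : Set (ℂ × ℂ) := {z | max ‖z.2‖ R ≤ ‖z.1‖}

/-- The element of the semigroup given by the word `w`:
`H_{w 0} ∘ H_{w 1} ∘ ⋯ ∘ H_{w (k-1)}`. -/
def wordProd {n : ℕ} (H : Fin n → Equiv.Perm (ℂ × ℂ)) {k : ℕ}
    (w : Fin k → Fin n) : Equiv.Perm (ℂ × ℂ) :=
  (List.ofFn fun j => H (w j)).prod

/-! ### Auxiliary lemmas -/

lemma VRm_anti {R R' : ℝ} (h : R ≤ R') : VRm R' ⊆ VRm R := fun z hz =>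
  le_trans (max_le_max le_rfl h) hz

lemma VRp_anti {R R' : ℝ} (h : R ≤ R') : VRp R' ⊆ VRp R := fun z hz =>
  le_trans (max_le_max le_rfl h) hz

/-- "Preserving" property of filtration regions beyond scale `S`. -/
def HPres (g : ℂ × ℂ → ℂ × ℂ) (S : ℝ) : Prop :=
  ∀ R, S ≤ R → ∀ z : ℂ × ℂ, (g z ∈ VRm R → z ∈ VRm R) ∧ (z ∈ VRp R → g z ∈ VRp R)

/-- "Doubling" property of filtration regions beyond scale `S`. -/
def HDoub (g : ℂ × ℂ → ℂ × ℂ) (S : ℝ) : Prop :=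
  ∀ R, S ≤ R → ∀ z : ℂ × ℂ,
    (g z ∈ VRm R → z ∈ VRm (2 * R)) ∧ (z ∈ VRp R → g z ∈ VRp (2 * R))

lemma HPres_id (S : ℝ) : HPres id S := fun _ _ _ => ⟨fun h => h, fun h => h⟩

lemma HPres.mono {g S S'} (hg : HPres g S) (h : S ≤ S') : HPres g S' :=
  fun R hR => hg R (le_trans h hR)

lemma HDoub.mono {g S S'} (hg : HDoub g S) (h : S ≤ S') : HDoub g S' :=
  fun R hR => hg R (le_trans h hR)

lemma HDoub.pres {g S} (hS : (1:ℝ) ≤ S) (hg : HDoub g S) : HPres g S := by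
  intro R hR z
  have hR0 : (0:ℝ) ≤ R := le_trans (le_trans zero_le_one hS) hR
  refine ⟨fun h => VRm_anti (by linarith) ((hg R hR z).1 h),
    fun h => VRp_anti (by linarith) ((hg R hR z).2 h)⟩

lemma HPres.comp {g g' S} (hg : HPres g S) (hg' : HPres g' S) :
    HPres (g ∘ g') S := by
  intro R hR z
  exact ⟨fun h => (hg' R hR z).1 ((hg R hR (g' z)).1 h),
    fun h => (hg R hR (g' z)).2 ((hg' R hR z).2 h)⟩

lemma HDoub.comp_pres {g g' S} (hS : (1:ℝ) ≤ S) (hg : HDoub g S) (hg' : HPres g' S) :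
    HDoub (g ∘ g') S := by
  intro R hR z
  have hR0 : (0:ℝ) ≤ R := le_trans (le_trans zero_le_one hS) hR
  have hR2 : S ≤ 2 * R := by linarith
  refine ⟨fun h => ?_, fun h => ?_⟩
  · exact (hg' (2*R) hR2 z).1 ((hg R hR (g' z)).1 h)
  · exact (hg R hR (g' z)).2 ((hg' R hR z).2 h)

/-- Lower bound for the growth of a polynomial of degree ≥ 2. -/
lemma poly_lb (p : Polynomial ℂ) (hp : 2 ≤ p.natDegree) (c : ℝ) (hc : 0 ≤ c) :
    ∃ S : ℝ, 1 ≤ S ∧ ∀ t : ℂ, S ≤ ‖t‖ → c * ‖t‖ ≤ ‖Polynomial.eval t p‖ := by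
  have hp0 : p ≠ 0 := fun h => by simp [h] at hp
  set d := p.natDegree with hd
  obtain ⟨e, he⟩ : ∃ e, d = e + 1 := ⟨d - 1, by omega⟩
  have he1 : 1 ≤ e := by omega
  set L := ‖p.leadingCoeff‖ with hLdef
  have hL : 0 < L := norm_pos_iff.mpr (Polynomial.leadingCoeff_ne_zero.mpr hp0)
  set M := ∑ i ∈ Finset.range d, ‖p.coeff i‖ with hMdef
  have hM : 0 ≤ M := Finset.sum_nonneg fun _ _ => norm_nonneg _
  have hdiv : 0 ≤ (M + c) / L := div_nonneg (by linarith) hL.le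
  refine ⟨(M + c) / L + 1, by linarith, fun t ht => ?_⟩
  have ht1 : (1:ℝ) ≤ ‖t‖ := le_trans (by linarith) ht
  have hLt : M + c ≤ L * ‖t‖ := by
    have h1 : (M + c) / L ≤ ‖t‖ := by linarith
    calc M + c = (M + c) / L * L := by field_simp
    _ ≤ ‖t‖ * L := by nlinarith
    _ = L * ‖t‖ := by ring
  have key : Polynomial.eval t p =
      (∑ i ∈ Finset.range d, p.coeff i * t ^ i) + p.leadingCoeff * t ^ d := by
    rw [Polynomial.eval_eq_sum_range, Finset.sum_range_succ, Polynomial.coeff_natDegree]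
  set A := ∑ i ∈ Finset.range d, p.coeff i * t ^ i with hAdef
  have hA : ‖A‖ ≤ M * ‖t‖ ^ e := by
    calc ‖A‖ ≤ ∑ i ∈ Finset.range d, ‖p.coeff i * t ^ i‖ := norm_sum_le _ _
    _ ≤ ∑ i ∈ Finset.range d, ‖p.coeff i‖ * ‖t‖ ^ e := by
        refine Finset.sum_le_sum fun i hi => ?_
        rw [norm_mul, norm_pow]
        refine mul_le_mul_of_nonneg_left ?_ (norm_nonneg _)
        exact pow_le_pow_right₀ ht1 (by simp [he] at hi ⊢; omega)
    _ = M * ‖t‖ ^ e := by rw [← Finset.sum_mul]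
  have hB : ‖p.leadingCoeff * t ^ d‖ = L * (‖t‖ ^ e * ‖t‖) := by
    rw [norm_mul, norm_pow, he, pow_succ]
  have hlow : ‖p.leadingCoeff * t ^ d‖ - ‖A‖ ≤ ‖Polynomial.eval t p‖ := by
    have : ‖p.leadingCoeff * t ^ d‖ ≤ ‖Polynomial.eval t p‖ + ‖A‖ := by
      calc ‖p.leadingCoeff * t ^ d‖ = ‖(A + p.leadingCoeff * t ^ d) - A‖ := by ring_nf
      _ ≤ ‖A + p.leadingCoeff * t ^ d‖ + ‖A‖ := norm_sub_le _ _
      _ = ‖Polynomial.eval t p‖ + ‖A‖ := by rw [← key]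
    linarith
  have hte : ‖t‖ ≤ ‖t‖ ^ e := by
    calc ‖t‖ = ‖t‖ ^ 1 := (pow_one _).symm
    _ ≤ ‖t‖ ^ e := pow_le_pow_right₀ ht1 he1
  have hte0 : (0:ℝ) ≤ ‖t‖ ^ e := by positivity
  nlinarith [mul_le_mul_of_nonneg_left hLt hte0]

/-- A generalized Hénon map has the doubling property beyond some scale. -/
lemma gen_doub {g : ℂ × ℂ → ℂ × ℂ} {d : ℕ} (hg : IsGenHenonDeg g d) :
    ∃ S, 1 ≤ S ∧ HDoub g S := by
  obtain ⟨a, p, ha, hdeg, -, hform⟩ := hg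
  have hA : 0 < ‖a‖ := norm_pos_iff.mpr ha
  obtain ⟨S, hS1, hS⟩ := poly_lb p hdeg (2 * ‖a‖ + 2) (by positivity)
  refine ⟨S, hS1, fun R hR z => ?_⟩
  obtain ⟨x, y⟩ := z
  rw [hform x y]
  constructor
  · intro hz
    simp only [VRm, Set.mem_setOf_eq] at hz ⊢
    have hyR : R ≤ ‖y‖ := le_trans (le_max_right _ _) hz
    have hpy : (2 * ‖a‖ + 2) * ‖y‖ ≤ ‖Polynomial.eval y p‖ := hS y (le_trans hR hyR)
    have h1 : ‖Polynomial.eval y p - a * x‖ ≤ ‖y‖ := le_trans (le_max_left _ _) hz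
    have h2 : ‖Polynomial.eval y p‖ - ‖a * x‖ ≤ ‖Polynomial.eval y p - a * x‖ :=
      norm_sub_norm_le _ _
    have hax : ‖a * x‖ = ‖a‖ * ‖x‖ := norm_mul a x
    have hy0 : (0:ℝ) ≤ ‖y‖ := norm_nonneg y
    have h2y : 2 * ‖y‖ ≤ ‖x‖ := by
      have hkey : ‖a‖ * (2 * ‖y‖) ≤ ‖a‖ * ‖x‖ := by nlinarith
      exact le_of_mul_le_mul_left hkey hA
    exact max_le (by linarith) (by linarith)
  · intro hz
    simp only [VRp, Set.mem_setOf_eq] at hz ⊢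
    have hyR : R ≤ ‖y‖ := le_trans (le_max_right _ _) hz
    have hxy : ‖x‖ ≤ ‖y‖ := le_trans (le_max_left _ _) hz
    have hpy : (2 * ‖a‖ + 2) * ‖y‖ ≤ ‖Polynomial.eval y p‖ := hS y (le_trans hR hyR)
    have h2 : ‖Polynomial.eval y p‖ - ‖a * x‖ ≤ ‖Polynomial.eval y p - a * x‖ :=
      norm_sub_norm_le _ _
    have hax : ‖a * x‖ = ‖a‖ * ‖x‖ := norm_mul a x
    have hy0 : (0:ℝ) ≤ ‖y‖ := norm_nonneg y
    have h2y : 2 * ‖y‖ ≤ ‖Polynomial.eval y p - a * x‖ := by nlinarith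
    exact max_le (by linarith) (by linarith)

/-- Compositions from a list of generalized Hénon maps: preserving, and doubling
if the list is nonempty. -/
lemma list_doub (l : List ((ℂ × ℂ → ℂ × ℂ) × ℕ))
    (hl : ∀ gd ∈ l, IsGenHenonDeg gd.1 gd.2) :
    ∃ S, 1 ≤ S ∧ HPres ((l.map Prod.fst).foldr (· ∘ ·) id) S ∧
      (l ≠ [] → HDoub ((l.map Prod.fst).foldr (· ∘ ·) id) S) := by
  induction l with
  | nil => exact ⟨1, le_rfl, HPres_id 1, fun h => absurd rfl h⟩
  | cons g l ih =>
    obtain ⟨S₂, hS₂1, hpres, -⟩ := ih (fun gd hgd => hl gd (List.mem_cons_of_mem _ hgd))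
    obtain ⟨S₁, hS₁1, hdoub⟩ := gen_doub (hl g List.mem_cons_self)
    refine ⟨max S₁ S₂, le_trans hS₁1 (le_max_left _ _), ?_, fun _ => ?_⟩
    all_goals
      have hd : HDoub (g.1 ∘ (l.map Prod.fst).foldr (· ∘ ·) id) (max S₁ S₂) :=
        HDoub.comp_pres (le_trans hS₁1 (le_max_left _ _))
          (hdoub.mono (le_max_left _ _)) (hpres.mono (le_max_right _ _))
    · exact (HDoub.pres (le_trans hS₁1 (le_max_left _ _)) hd)
    · exact hd

/-- A Hénon map has the doubling property beyond some scale. -/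
lemma henon_doub {h : ℂ × ℂ → ℂ × ℂ} (hh : IsHenon h) : ∃ S, 1 ≤ S ∧ HDoub h S := by
  obtain ⟨d, l, hl0, hlg, hform, -⟩ := hh
  obtain ⟨S, hS1, -, hdoub⟩ := list_doub l hlg
  exact ⟨S, hS1, hform ▸ hdoub hl0⟩

lemma wordProd_zero {n : ℕ} (H : Fin n → Equiv.Perm (ℂ × ℂ)) (w : Fin 0 → Fin n) :
    wordProd H w = 1 := by simp [wordProd]

lemma wordProd_succ {n k : ℕ} (H : Fin n → Equiv.Perm (ℂ × ℂ)) (w : Fin (k+1) → Fin n) :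
    wordProd H w = H (w 0) * wordProd H (fun j => w j.succ) := by
  simp [wordProd, List.ofFn_succ]

/-- The key filtration estimate for words. -/
lemma word_lem {n : ℕ} (H : Fin n → Equiv.Perm (ℂ × ℂ)) {S : ℝ} (hS1 : 1 ≤ S)
    (hDoub : ∀ i, HDoub ⇑(H i) S) :
    ∀ (k : ℕ) (w : Fin k → Fin n) (R : ℝ), S ≤ R → ∀ z : ℂ × ℂ,
      ((wordProd H w) z ∈ VRm R → z ∈ VRm (2 ^ k * R)) ∧
      (z ∈ VRp R → (wordProd H w) z ∈ VRp (2 ^ k * R)) := by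
  intro k
  induction k with
  | zero =>
    intro w R hR z
    simp only [wordProd_zero, Equiv.Perm.coe_one, id_eq, pow_zero, one_mul]
    exact ⟨fun h => h, fun h => h⟩
  | succ k ih =>
    intro w R hR z
    have hR0 : (0:ℝ) < R := lt_of_lt_of_le (lt_of_lt_of_le one_pos hS1) hR
    rw [wordProd_succ, Equiv.Perm.mul_apply]
    constructor
    · intro hz
      have h1 := (hDoub (w 0) R hR _).1 hz
      have h2 := (ih (fun j => w j.succ) (2 * R) (by linarith) z).1 h1
      have : (2:ℝ) ^ (k+1) * R = 2 ^ k * (2 * R) := by ring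
      rw [this]; exact h2
    · intro hz
      have h1 := (ih (fun j => w j.succ) R hR z).2 hz
      have hSk : S ≤ 2 ^ k * R := le_trans hR (le_mul_of_one_le_left hR0.le (by
        have := pow_le_pow_right₀ (one_le_two (α := ℝ)) (Nat.zero_le k)
        simpa using this))
      have h2 := (hDoub (w 0) (2 ^ k * R) hSk _).2 h1
      have : (2:ℝ) ^ (k+1) * R = 2 * (2 ^ k * R) := by ring
      rw [this]; exact h2

lemma isOpen_strictVRp (R : ℝ) : IsOpen {w : ℂ × ℂ | max ‖w.1‖ R < ‖w.2‖} :=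
  isOpen_lt (Continuous.max continuous_fst.norm continuous_const) continuous_snd.norm

lemma isOpen_strictVRm (R : ℝ) : IsOpen {w : ℂ × ℂ | max ‖w.2‖ R < ‖w.1‖} :=
  isOpen_lt (Continuous.max continuous_snd.norm continuous_const) continuous_fst.norm

/-- for every compact `C ⊆ ℂ²` there is `k_C` so that every word of
length `k ≥ k_C` maps `C` into `V_R ∪ int(V_R^+)`, and a `k'_C` so that inverses of
words of length `k ≥ k'_C` map `C` into `V_R ∪ int(V_R^-)`. -/
theorem compact_absorption (n : ℕ) (hn : 0 < n)
    (H : Fin n → Equiv.Perm (ℂ × ℂ)) (hH : ∀ i, IsHenon ⇑(H i)) :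
    ∃ RS > (0 : ℝ), ∀ R > RS, ∀ C : Set (ℂ × ℂ), IsCompact C →
      (∃ kC : ℕ, 1 ≤ kC ∧ ∀ k ≥ kC, ∀ w : Fin k → Fin n,
        ⇑(wordProd H w) '' C ⊆ VR R ∪ interior (VRp R)) ∧
      (∃ kC' : ℕ, 1 ≤ kC' ∧ ∀ k ≥ kC', ∀ w : Fin k → Fin n,
        ⇑(wordProd H w)⁻¹ '' C ⊆ VR R ∪ interior (VRm R)) := by
  choose S hS1 hSd using fun i => henon_doub (hH i)
  set S₀ : ℝ := 1 + ∑ i, S i with hS₀def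
  have hSnn : ∀ i, (0:ℝ) ≤ S i := fun i => le_trans zero_le_one (hS1 i)
  have hS₀1 : (1:ℝ) ≤ S₀ := by
    have : (0:ℝ) ≤ ∑ i, S i := Finset.sum_nonneg fun i _ => hSnn i
    simp only [hS₀def]; linarith
  have hS₀i : ∀ i, S i ≤ S₀ := by
    intro i
    have : S i ≤ ∑ j, S j := Finset.single_le_sum (fun j _ => hSnn j) (Finset.mem_univ i)
    simp only [hS₀def]; linarith
  have hDoub : ∀ i, HDoub ⇑(H i) S₀ := fun i => (hSd i).mono (hS₀i i)
  refine ⟨S₀, lt_of_lt_of_le one_pos hS₀1, fun R hR C hC => ?_⟩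
  have hRS : S₀ ≤ R := le_of_lt hR
  have hR0 : (0:ℝ) < R := lt_of_lt_of_le (lt_of_lt_of_le one_pos hS₀1) hRS
  obtain ⟨ρ, hρ⟩ := isBounded_iff_forall_norm_le.mp hC.isBounded
  obtain ⟨m, hm⟩ := pow_unbounded_of_one_lt (ρ / R) (one_lt_two (α := ℝ))
  have hρR : ρ < 2 ^ m * R := by
    rw [div_lt_iff₀ hR0] at hm; linarith
  have hmono : ∀ k, max m 1 ≤ k → ρ < 2 ^ k * R := by
    intro k hk
    refine lt_of_lt_of_le hρR ?_
    exact mul_le_mul_of_nonneg_right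
      (pow_le_pow_right₀ one_le_two (le_trans (le_max_left _ _) hk)) hR0.le
  have hwl := word_lem H hS₀1 hDoub
  constructor
  · refine ⟨max m 1, le_max_right _ _, fun k hk w => ?_⟩
    rintro y ⟨z, hzC, rfl⟩
    by_cases h1 : max ‖((wordProd H w) z).1‖ ‖((wordProd H w) z).2‖ ≤ R
    · exact Or.inl h1
    by_cases h2 : max ‖((wordProd H w) z).1‖ R < ‖((wordProd H w) z).2‖
    · have hsub : {w : ℂ × ℂ | max ‖w.1‖ R < ‖w.2‖} ⊆ VRp R := fun v hv => show max ‖v.1‖ R ≤ ‖v.2‖ from le_of_lt hv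
      exact Or.inr (interior_maximal hsub (isOpen_strictVRp R) h2)
    · exfalso
      push_neg at h1 h2
      have hfx : R < ‖((wordProd H w) z).1‖ := by
        rcases le_or_gt ‖((wordProd H w) z).1‖ R with h | h
        · exact absurd (max_le h (le_trans h2 (max_le h le_rfl))) (not_le.mpr h1)
        · exact h
      have hmem : (wordProd H w) z ∈ VRm R :=
        max_le (le_trans h2 (max_le le_rfl hfx.le)) hfx.le
      have hz := (hwl k w R hRS z).1 hmem
      have h3 : 2 ^ k * R ≤ ‖z.1‖ := le_trans (le_max_right _ _) hz
      have h4 : ‖z.1‖ ≤ ρ := le_trans (norm_fst_le z) (hρ z hzC)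
      exact absurd (lt_of_lt_of_le (hmono k hk) (le_trans h3 h4)) (lt_irrefl ρ)
  · refine ⟨max m 1, le_max_right _ _, fun k hk w => ?_⟩
    rintro y ⟨z, hzC, rfl⟩
    set u := ⇑(wordProd H w)⁻¹ z with hudef
    have hfu : (wordProd H w) u = z := Equiv.apply_symm_apply _ z
    by_cases h1 : max ‖u.1‖ ‖u.2‖ ≤ R
    · exact Or.inl h1
    by_cases h2 : max ‖u.2‖ R < ‖u.1‖
    · have hsub : {w : ℂ × ℂ | max ‖w.2‖ R < ‖w.1‖} ⊆ VRm R := fun v hv => show max ‖v.2‖ R ≤ ‖v.1‖ from le_of_lt hv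
      exact Or.inr (interior_maximal hsub (isOpen_strictVRm R) h2)
    · exfalso
      push_neg at h1 h2
      have hfy : R < ‖u.2‖ := by
        rcases le_or_gt ‖u.2‖ R with h | h
        · exact absurd (max_le (le_trans h2 (max_le h le_rfl)) h) (not_le.mpr h1)
        · exact h
      have hmem : u ∈ VRp R :=
        max_le (le_trans h2 (max_le le_rfl hfy.le)) hfy.le
      have hz := (hwl k w R hRS u).2 hmem
      rw [hfu] at hz
      have h3 : 2 ^ k * R ≤ ‖z.2‖ := le_trans (le_max_right _ _) hz
      have h4 : ‖z.2‖ ≤ ρ := le_trans (norm_snd_le z) (hρ z hzC)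
      exact absurd (lt_of_lt_of_le (hmono k hk) (le_trans h3 h4)) (lt_irrefl ρ)
end
end

section
/- For a non-autonomous sequence {h_k} of Hénon maps drawn from a finite generating set of an attracting semigroup, the boundary of the non-autonomous attracting basin Ω_{h} at the origin is contained in the boundary of the non-autonomous filled positive Julia set: ∂Ω_{h} ⊆ ∂K_{h}^+. -/
open Filter Metric Set Bornology

noncomputable section

/-- The non-autonomous composition `h(k) = h_k ∘ ⋯ ∘ h_1` (with `h(0) = id`). -/
def compSeq (h : ℕ → ℂ × ℂ → ℂ × ℂ) : ℕ → ℂ × ℂ → ℂ × ℂ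
  | 0 => id
  | k + 1 => h (k + 1) ∘ compSeq h k

lemma genHenon_diff {g : ℂ × ℂ → ℂ × ℂ} {d : ℕ} (hg : IsGenHenonDeg g d) :
    Differentiable ℂ g := by
  obtain ⟨a, p, -, -, -, hfun⟩ := hg
  have hG : g = fun z : ℂ × ℂ => (z.2, p.eval z.2 - a * z.1) := by
    funext z
    have := hfun z.1 z.2
    simpa using this
  rw [hG]
  exact (differentiable_snd).prodMk
    ((p.differentiable.comp differentiable_snd).sub
      ((differentiable_const a).mul differentiable_fst))

lemma poly_growth (p : Polynomial ℂ) (hd : 2 ≤ p.natDegree) (a : ℂ) :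
    ∃ R₀ : ℝ, 1 ≤ R₀ ∧ ∀ y : ℂ, R₀ ≤ ‖y‖ → (‖a‖ + 2) * ‖y‖ ≤ ‖p.eval y‖ := by
  have hp0 : p ≠ 0 := by
    intro h0
    rw [h0, Polynomial.natDegree_zero] at hd
    omega
  set d := p.natDegree with hdd
  set c := ‖p.leadingCoeff‖ with hc
  have hc0 : 0 < c := norm_pos_iff.mpr (Polynomial.leadingCoeff_ne_zero.mpr hp0)
  set M := ∑ j ∈ Finset.range d, ‖p.coeff j‖ with hM
  have hM0 : 0 ≤ M := Finset.sum_nonneg fun _ _ => norm_nonneg _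
  refine ⟨max 1 ((M + ‖a‖ + 2) / c), le_max_left _ _, fun y hy => ?_⟩
  have hy1 : (1:ℝ) ≤ ‖y‖ := le_trans (le_max_left _ _) hy
  have hy2 : (M + ‖a‖ + 2) / c ≤ ‖y‖ := le_trans (le_max_right _ _) hy
  have hyc : M + ‖a‖ + 2 ≤ c * ‖y‖ := by
    rw [div_le_iff₀ hc0] at hy2; linarith [hy2]
  -- eval as sum
  have heval : p.eval y = (∑ j ∈ Finset.range d, p.coeff j * y ^ j) + p.leadingCoeff * y ^ d := by
    have := Polynomial.eval_eq_sum_range' (p := p) (show p.natDegree < d + 1 by omega) y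
    rw [this, Finset.sum_range_succ, Polynomial.coeff_natDegree]
  have hbound : ∀ j ∈ Finset.range d, ‖p.coeff j * y ^ j‖ ≤ ‖p.coeff j‖ * ‖y‖ ^ (d - 1) := by
    intro j hj
    rw [norm_mul, norm_pow]
    exact mul_le_mul_of_nonneg_left
      (pow_le_pow_right₀ hy1 (by simp at hj; omega)) (norm_nonneg _)
  have hsum : ‖∑ j ∈ Finset.range d, p.coeff j * y ^ j‖ ≤ M * ‖y‖ ^ (d - 1) := by
    calc ‖∑ j ∈ Finset.range d, p.coeff j * y ^ j‖
        ≤ ∑ j ∈ Finset.range d, ‖p.coeff j * y ^ j‖ := norm_sum_le _ _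
      _ ≤ ∑ j ∈ Finset.range d, ‖p.coeff j‖ * ‖y‖ ^ (d - 1) := Finset.sum_le_sum hbound
      _ = M * ‖y‖ ^ (d - 1) := by rw [hM, Finset.sum_mul]
  have hlead : ‖p.leadingCoeff * y ^ d‖ = c * ‖y‖ ^ (d - 1) * ‖y‖ := by
    conv_lhs => rw [show d = (d - 1) + 1 by omega]
    rw [pow_succ, norm_mul, norm_mul, norm_pow]
    ring
  have hmain : (c * ‖y‖ - M) * ‖y‖ ^ (d - 1) ≤ ‖p.eval y‖ := by
    have h1 : ‖p.leadingCoeff * y ^ d‖ - ‖∑ j ∈ Finset.range d, p.coeff j * y ^ j‖ ≤ ‖p.eval y‖ := by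
      rw [heval]
      have hh := norm_sub_norm_le (p.leadingCoeff * y ^ d)
        (-(∑ j ∈ Finset.range d, p.coeff j * y ^ j))
      rw [norm_neg, sub_neg_eq_add, add_comm] at hh
      exact hh
    have h2 : (c * ‖y‖ - M) * ‖y‖ ^ (d - 1) ≤
        ‖p.leadingCoeff * y ^ d‖ - ‖∑ j ∈ Finset.range d, p.coeff j * y ^ j‖ := by
      rw [hlead]; nlinarith [hsum, pow_nonneg (norm_nonneg y) (d - 1)]
    linarith
  have hpow : ‖y‖ ≤ ‖y‖ ^ (d - 1) := by
    calc ‖y‖ = ‖y‖ ^ 1 := (pow_one _).symm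
      _ ≤ ‖y‖ ^ (d - 1) := pow_le_pow_right₀ hy1 (by omega)
  calc (‖a‖ + 2) * ‖y‖ ≤ (c * ‖y‖ - M) * ‖y‖ := by nlinarith [norm_nonneg y, hy1]
    _ ≤ (c * ‖y‖ - M) * ‖y‖ ^ (d - 1) := by nlinarith [hyc, norm_nonneg a]
    _ ≤ ‖p.eval y‖ := hmain

lemma foldr_diff (l : List ((ℂ × ℂ → ℂ × ℂ) × ℕ))
    (hfac : ∀ gd ∈ l, IsGenHenonDeg gd.1 gd.2) :
    Differentiable ℂ ((l.map Prod.fst).foldr (· ∘ ·) id) := by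
  induction l with
  | nil => simp only [List.map_nil, List.foldr_nil]; exact differentiable_id
  | cons hd tl ih =>
      simp only [List.map_cons, List.foldr_cons]
      exact (genHenon_diff (hfac hd (by simp))).comp (ih fun gd hgd => hfac gd (by simp [hgd]))

lemma henon_diff {g : ℂ × ℂ → ℂ × ℂ} (hg : IsHenon g) : Differentiable ℂ g := by
  obtain ⟨d, l, -, hfac, hcomp, -⟩ := hg
  rw [hcomp]
  exact foldr_diff l hfac

/-- The filtration property at scale `R`. -/
def Pfilt (R : ℝ) (g : ℂ × ℂ → ℂ × ℂ) : Prop :=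
  ∀ z : ℂ × ℂ,
    (max ‖z.1‖ R ≤ ‖z.2‖ → max ‖(g z).1‖ R ≤ ‖(g z).2‖ ∧ 2 * ‖z.2‖ ≤ ‖(g z).2‖) ∧
    (max ‖(g z).1‖ R ≤ ‖(g z).2‖ ∨ ‖g z‖ ≤ max ‖z‖ R)

lemma pfilt_factor {g : ℂ × ℂ → ℂ × ℂ} {d : ℕ} (hg : IsGenHenonDeg g d) :
    ∃ R₀ : ℝ, 1 ≤ R₀ ∧ ∀ R, R₀ ≤ R → Pfilt R g := by
  obtain ⟨a, p, -, hdeg, -, hfun⟩ := hg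
  obtain ⟨R₀, hR₀1, hpg⟩ := poly_growth p hdeg a
  refine ⟨R₀, hR₀1, fun R hR z => ?_⟩
  have hz : g z = (z.2, p.eval z.2 - a * z.1) := by
    have := hfun z.1 z.2; simpa using this
  constructor
  · intro hyp
    have h1 : ‖z.1‖ ≤ ‖z.2‖ := le_trans (le_max_left _ _) hyp
    have h2 : R ≤ ‖z.2‖ := le_trans (le_max_right _ _) hyp
    have h3 : R₀ ≤ ‖z.2‖ := le_trans hR h2
    have hp2 : (‖a‖ + 2) * ‖z.2‖ ≤ ‖p.eval z.2‖ := hpg z.2 h3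
    have hsub : ‖p.eval z.2‖ - ‖a * z.1‖ ≤ ‖p.eval z.2 - a * z.1‖ := norm_sub_norm_le _ _
    have hax : ‖a * z.1‖ ≤ ‖a‖ * ‖z.2‖ := by
      rw [norm_mul]; exact mul_le_mul_of_nonneg_left h1 (norm_nonneg a)
    have hkey : 2 * ‖z.2‖ ≤ ‖(g z).2‖ := by
      rw [hz]; simp only; nlinarith
    refine ⟨?_, hkey⟩
    have hz2 : 0 ≤ ‖z.2‖ := norm_nonneg _
    rw [hz]; simp only
    rw [max_le_iff]
    constructor
    · nlinarith
    · nlinarith [hkey, hz ▸ hkey]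
  · by_cases hca : max ‖(g z).1‖ R ≤ ‖(g z).2‖
    · exact Or.inl hca
    · right
      push_neg at hca
      have h1 : ‖(g z).1‖ = ‖z.2‖ := by rw [hz]
      have h2 : ‖(g z).2‖ ≤ max ‖z.2‖ R := by
        refine le_of_lt (lt_of_lt_of_le hca ?_)
        rw [h1]
      have hn : ‖g z‖ = max ‖(g z).1‖ ‖(g z).2‖ := Prod.norm_def _
      rw [hn, h1]
      have hz2 : ‖z.2‖ ≤ ‖z‖ := norm_snd_le z
      rw [max_le_iff]
      exact ⟨le_max_of_le_left hz2,
        le_trans h2 (max_le_max_right _ hz2)⟩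

lemma pfilt_comp {R : ℝ} {f g : ℂ × ℂ → ℂ × ℂ} (hf : Pfilt R f) (hg : Pfilt R g) :
    Pfilt R (g ∘ f) := by
  intro z
  constructor
  · intro hyp
    obtain ⟨h1, h2⟩ := (hf z).1 hyp
    obtain ⟨h3, h4⟩ := (hg (f z)).1 h1
    refine ⟨h3, ?_⟩
    have : 0 ≤ ‖z.2‖ := norm_nonneg _
    simp only [Function.comp_apply]
    linarith
  · rcases (hf z).2 with hplus | hbd
    · exact Or.inl ((hg (f z)).1 hplus).1
    · rcases (hg (f z)).2 with hplus | hbd2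
      · exact Or.inl hplus
      · right
        simp only [Function.comp_apply] at hbd2 ⊢
        calc ‖g (f z)‖ ≤ max ‖f z‖ R := hbd2
          _ ≤ max (max ‖z‖ R) R := max_le_max_right _ hbd
          _ = max ‖z‖ R := by rw [max_assoc, max_self]

lemma pfilt_foldr : ∀ (l : List ((ℂ × ℂ → ℂ × ℂ) × ℕ)), l ≠ [] →
    (∀ gd ∈ l, IsGenHenonDeg gd.1 gd.2) →
    ∃ R₀ : ℝ, 1 ≤ R₀ ∧ ∀ R, R₀ ≤ R → Pfilt R ((l.map Prod.fst).foldr (· ∘ ·) id)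
  | [], hne, _ => absurd rfl hne
  | [gd], _, hfac => by
      obtain ⟨R₀, h1, h2⟩ := pfilt_factor (hfac gd (by simp))
      refine ⟨R₀, h1, fun R hR => ?_⟩
      simp only [List.map_cons, List.map_nil, List.foldr_cons, List.foldr_nil]
      rw [Function.comp_id]
      exact h2 R hR
  | gd :: b :: tl, _, hfac => by
      obtain ⟨R₁, h11, h12⟩ := pfilt_factor (hfac gd (by simp))
      obtain ⟨R₂, h21, h22⟩ := pfilt_foldr (b :: tl) (by simp)
        (fun x hx => hfac x (by simp only [List.mem_cons] at hx ⊢; tauto))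
      refine ⟨max R₁ R₂, le_trans h11 (le_max_left _ _), fun R hR => ?_⟩
      simp only [List.map_cons, List.foldr_cons] at h22 ⊢
      exact pfilt_comp (h22 R (le_trans (le_max_right _ _) hR))
        (h12 R (le_trans (le_max_left _ _) hR))

lemma pfilt_henon {g : ℂ × ℂ → ℂ × ℂ} (hg : IsHenon g) :
    ∃ R₀ : ℝ, 1 ≤ R₀ ∧ ∀ R, R₀ ≤ R → Pfilt R g := by
  obtain ⟨d, l, hne, hfac, hcomp, -⟩ := hg
  rw [hcomp]
  exact pfilt_foldr l hne hfac

lemma exists_uniform_R (n : ℕ) (hn : 0 < n) (Hgen : Fin n → ℂ × ℂ → ℂ × ℂ)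
    (hHenon : ∀ i, IsHenon (Hgen i)) :
    ∃ R : ℝ, 1 ≤ R ∧ ∀ i, Pfilt R (Hgen i) := by
  choose R₀ h1 h2 using fun i => pfilt_henon (hHenon i)
  have : Nonempty (Fin n) := ⟨⟨0, hn⟩⟩
  refine ⟨Finset.univ.sup' Finset.univ_nonempty R₀,
    le_trans (h1 ⟨0, hn⟩) (Finset.le_sup' R₀ (Finset.mem_univ _)),
    fun i => h2 i _ (Finset.le_sup' R₀ (Finset.mem_univ i))⟩

lemma orbit_bound (R : ℝ) (hR1 : 1 ≤ R) (h : ℕ → ℂ × ℂ → ℂ × ℂ)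
    (hP : ∀ k, 1 ≤ k → Pfilt R (h k)) (z : ℂ × ℂ)
    (hb : IsBounded (Set.range fun k => compSeq h k z)) :
    ∀ k, ‖compSeq h k z‖ ≤ max ‖z‖ R := by
  obtain ⟨C, hC⟩ := isBounded_iff_forall_norm_le.1 hb
  have hC' : ∀ k, ‖compSeq h k z‖ ≤ C := fun k => hC _ (mem_range_self k)
  have hnot : ∀ k, ¬ max ‖(compSeq h k z).1‖ R ≤ ‖(compSeq h k z).2‖ := by
    intro k0 hk0
    have grow : ∀ m : ℕ, max ‖(compSeq h (k0 + m) z).1‖ R ≤ ‖(compSeq h (k0 + m) z).2‖ ∧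
        2 ^ m * R ≤ ‖(compSeq h (k0 + m) z).2‖ := by
      intro m
      induction m with
      | zero =>
          refine ⟨by simpa using hk0, ?_⟩
          simpa using le_trans (le_max_right _ _) hk0
      | succ m ih =>
          have hstep := (hP (k0 + m + 1) (by omega) (compSeq h (k0 + m) z)).1 ih.1
          have heq : compSeq h (k0 + (m + 1)) z = h (k0 + m + 1) (compSeq h (k0 + m) z) := rfl
          rw [heq]
          refine ⟨hstep.1, ?_⟩
          have h2 := hstep.2
          have := ih.2
          have hRpos : (0:ℝ) < R := lt_of_lt_of_le one_pos hR1
          calc (2:ℝ) ^ (m + 1) * R = 2 * (2 ^ m * R) := by ring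
            _ ≤ 2 * ‖(compSeq h (k0 + m) z).2‖ := by linarith
            _ ≤ _ := h2
    obtain ⟨m, hm⟩ := pow_unbounded_of_one_lt C (by norm_num : (1:ℝ) < 2)
    have hgr := (grow m).2
    have : (2:ℝ) ^ m ≤ 2 ^ m * R := le_mul_of_one_le_right (by positivity) hR1
    have hsnd : ‖(compSeq h (k0 + m) z).2‖ ≤ ‖compSeq h (k0 + m) z‖ := norm_snd_le _
    have := hC' (k0 + m)
    linarith
  intro k
  induction k with
  | zero => exact le_max_left ‖z‖ R
  | succ k ih =>
      have heq : compSeq h (k + 1) z = h (k + 1) (compSeq h k z) := rfl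
      rcases (hP (k + 1) (by omega) (compSeq h k z)).2 with hplus | hbd
      · exact absurd (show max ‖(compSeq h (k+1) z).1‖ R ≤ ‖(compSeq h (k+1) z).2‖ by rw [heq]; exact hplus) (hnot (k + 1))
      · rw [heq]
        calc ‖h (k + 1) (compSeq h k z)‖ ≤ max ‖compSeq h k z‖ R := hbd
          _ ≤ max (max ‖z‖ R) R := max_le_max_right _ ih
          _ = max ‖z‖ R := by rw [max_assoc, max_self]

lemma compSeq_diff (h : ℕ → ℂ × ℂ → ℂ × ℂ) (hd : ∀ k, 1 ≤ k → Differentiable ℂ (h k)) :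
    ∀ k, Differentiable ℂ (compSeq h k)
  | 0 => differentiable_id
  | k + 1 => (hd (k + 1) (by omega)).comp (compSeq_diff h hd k)

lemma basin_unif {n : ℕ} {Hgen : Fin n → ℂ × ℂ → ℂ × ℂ}
    {r α : ℝ} (hr : 0 < r) (hα0 : 0 < α) (hα1 : α < 1)
    (hattr : ∀ i, ∀ z ∈ Metric.ball (0 : ℂ × ℂ) r, ‖Hgen i z‖ ≤ α * ‖z‖)
    (h : ℕ → ℂ × ℂ → ℂ × ℂ) (hmem : ∀ k, ∃ i, h k = Hgen i)
    (hFdiff : ∀ k, Differentiable ℂ (compSeq h k))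
    {z : ℂ × ℂ} (hz : Tendsto (fun k => compSeq h k z) atTop (nhds 0)) :
    ∃ ε > 0, ∀ η > 0, ∃ K, ∀ k ≥ K, ∀ u ∈ ball z ε, ‖compSeq h k u‖ ≤ η := by
  -- find k₀ with ‖F_{k₀} z‖ < r
  obtain ⟨k₀, hk₀⟩ : ∃ k₀, ‖compSeq h k₀ z‖ < r := by
    have := Metric.tendsto_atTop.mp hz r hr
    obtain ⟨K, hK⟩ := this
    exact ⟨K, by simpa [dist_zero_right] using hK K le_rfl⟩
  -- continuity gives a ball
  obtain ⟨ε, hε0, hεball⟩ : ∃ ε > 0, ∀ u ∈ ball z ε, ‖compSeq h k₀ u‖ < r := by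
    have hcont : Continuous fun u => ‖compSeq h k₀ u‖ := (hFdiff k₀).continuous.norm
    have hopen : IsOpen {u : ℂ × ℂ | ‖compSeq h k₀ u‖ < r} := isOpen_lt hcont continuous_const
    obtain ⟨ε, hε0, hsub⟩ := Metric.isOpen_iff.mp hopen z hk₀
    exact ⟨ε, hε0, fun u hu => hsub hu⟩
  -- contraction
  have hcontract : ∀ u ∈ ball z ε, ∀ j : ℕ,
      ‖compSeq h (k₀ + j) u‖ ≤ α ^ j * ‖compSeq h k₀ u‖ := by
    intro u hu j
    induction j with
    | zero => simp
    | succ j ih =>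
        have hlt : ‖compSeq h (k₀ + j) u‖ < r := by
          have hαj : α ^ j ≤ 1 := pow_le_one₀ hα0.le hα1.le
          have h1 : α ^ j * ‖compSeq h k₀ u‖ ≤ ‖compSeq h k₀ u‖ :=
            mul_le_of_le_one_left (norm_nonneg _) hαj
          exact lt_of_le_of_lt (le_trans ih h1) (hεball u hu)
        obtain ⟨i, hi⟩ := hmem (k₀ + j + 1)
        have heq : compSeq h (k₀ + (j + 1)) u = h (k₀ + j + 1) (compSeq h (k₀ + j) u) := rfl
        rw [heq, hi]
        have := hattr i (compSeq h (k₀ + j) u) (mem_ball_zero_iff.mpr hlt)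
        calc ‖Hgen i (compSeq h (k₀ + j) u)‖ ≤ α * ‖compSeq h (k₀ + j) u‖ := this
          _ ≤ α * (α ^ j * ‖compSeq h k₀ u‖) := mul_le_mul_of_nonneg_left ih hα0.le
          _ = α ^ (j + 1) * ‖compSeq h k₀ u‖ := by ring
  refine ⟨ε, hε0, fun η hη => ?_⟩
  obtain ⟨j₀, hj₀⟩ : ∃ j₀ : ℕ, α ^ j₀ * r < η := by
    have := tendsto_pow_atTop_nhds_zero_of_lt_one hα0.le hα1
    have h2 := Metric.tendsto_atTop.mp this (η / r) (by positivity)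
    obtain ⟨j₀, hj₀⟩ := h2
    refine ⟨j₀, ?_⟩
    have := hj₀ j₀ le_rfl
    rw [dist_zero_right, Real.norm_eq_abs, abs_of_nonneg (by positivity)] at this
    rw [← lt_div_iff₀ hr]
    exact this
  refine ⟨k₀ + j₀, fun k hk u hu => ?_⟩
  have hj : k = k₀ + (k - k₀) := by omega
  have h1 := hcontract u hu (k - k₀)
  rw [← hj] at h1
  have h2 : α ^ (k - k₀) ≤ α ^ j₀ := pow_le_pow_of_le_one hα0.le hα1.le (by omega)
  calc ‖compSeq h k u‖ ≤ α ^ (k - k₀) * ‖compSeq h k₀ u‖ := h1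
    _ ≤ α ^ (k - k₀) * r := mul_le_mul_of_nonneg_left (hεball u hu).le (by positivity)
    _ ≤ α ^ j₀ * r := mul_le_mul_of_nonneg_right h2 hr.le
    _ ≤ η := hj₀.le

variable {E : Type*} [NormedAddCommGroup E] [NormedSpace ℂ E]

lemma cauchy_coeff_bound (f : ℂ → E) (ρ : ℝ) (hρ : 0 < ρ) (M : ℝ)
    (hf : ContinuousOn f (sphere (0:ℂ) ρ)) (hM : ∀ w ∈ sphere (0:ℂ) ρ, ‖f w‖ ≤ M) (n : ℕ) :
    ‖cauchyPowerSeries f 0 ρ n‖ ≤ M * ρ⁻¹ ^ n := by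
  have hM0 : 0 ≤ M := le_trans (norm_nonneg _) (hM ρ (by simp [Real.norm_eq_abs, abs_of_pos hρ, hρ.le]))
  have hcont : ContinuousOn (fun θ : ℝ => ‖f (circleMap 0 ρ θ)‖) (uIcc 0 (2 * Real.pi)) := by
    apply ContinuousOn.norm
    exact hf.comp (continuous_circleMap 0 ρ).continuousOn
      (fun θ _ => circleMap_mem_sphere 0 hρ.le θ)
  have hint : ∫ θ : ℝ in (0)..(2 * Real.pi), ‖f (circleMap 0 ρ θ)‖ ≤ 2 * Real.pi * M := by
    have h1 : ∫ θ : ℝ in (0)..(2 * Real.pi), ‖f (circleMap 0 ρ θ)‖ ≤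
        ∫ _ : ℝ in (0)..(2 * Real.pi), M := by
      apply intervalIntegral.integral_mono_on Real.two_pi_pos.le
      · exact hcont.intervalIntegrable
      · exact intervalIntegrable_const
      · exact fun θ _ => hM _ (circleMap_mem_sphere 0 hρ.le θ)
    simpa using h1
  have := norm_cauchyPowerSeries_le f 0 ρ n
  have habs : |ρ| = ρ := abs_of_pos hρ
  rw [habs] at this
  refine le_trans this ?_
  have h2π : (0:ℝ) < (2 * Real.pi)⁻¹ := by positivity
  have : (2 * Real.pi)⁻¹ * (∫ θ : ℝ in (0)..(2 * Real.pi), ‖f (circleMap 0 ρ θ)‖) ≤ M := by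
    rw [inv_mul_le_iff₀ (by positivity)]
    linarith [hint]
  exact mul_le_mul_of_nonneg_right this (by positivity)

variable [CompleteSpace E]

lemma vitali_disk (f : ℕ → ℂ → E) (C δ : ℝ) (hC0 : 0 ≤ C) (hδ0 : 0 < δ) (hδ1 : δ ≤ 1)
    (hdiff : ∀ k, DifferentiableOn ℂ (f k) (closedBall (0:ℂ) 1))
    (hbd : ∀ k, ∀ w ∈ closedBall (0:ℂ) 1, ‖f k w‖ ≤ C)
    (hsmall : ∀ η > 0, ∃ K, ∀ k ≥ K, ∀ w ∈ closedBall (0:ℂ) δ, ‖f k w‖ ≤ η)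
    (t : ℂ) (ht : ‖t‖ < 1) :
    Tendsto (fun k => f k t) atTop (nhds 0) := by
  set δ' : NNReal := ⟨δ, hδ0.le⟩ with hδ'
  have hδ'c : (δ' : ℝ) = δ := rfl
  -- power series on unit ball
  have hp : ∀ k, HasFPowerSeriesOnBall (f k) (cauchyPowerSeries (f k) 0 1) 0 1 := by
    intro k
    have := (hdiff k).hasFPowerSeriesOnBall (R := 1) one_pos
    simpa using this
  have hq : ∀ k, HasFPowerSeriesOnBall (f k) (cauchyPowerSeries (f k) 0 δ) 0 δ' := by
    intro k
    have hsub : closedBall (0:ℂ) δ ⊆ closedBall 0 1 := closedBall_subset_closedBall hδ1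
    have := ((hdiff k).mono hsub).hasFPowerSeriesOnBall (R := δ')
      (by exact_mod_cast hδ0)
    simpa [hδ'c] using this
  have heqpq : ∀ k, cauchyPowerSeries (f k) 0 1 = cauchyPowerSeries (f k) 0 δ := fun k =>
    (hp k).hasFPowerSeriesAt.eq_formalMultilinearSeries (hq k).hasFPowerSeriesAt
  set p : ℕ → FormalMultilinearSeries ℂ ℂ E := fun k => cauchyPowerSeries (f k) 0 1 with hpdef
  -- uniform coefficient bound
  have hcoef_bd : ∀ k n, ‖p k n‖ ≤ C := by
    intro k n
    have hsph : sphere (0:ℂ) 1 ⊆ closedBall 0 1 := sphere_subset_closedBall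
    have := cauchy_coeff_bound (f k) 1 one_pos C
      ((hdiff k).continuousOn.mono hsph) (fun w hw => hbd k w (hsph hw)) n
    simpa using this
  -- coefficient smallness
  have hcoef_small : ∀ η > 0, ∃ K, ∀ k ≥ K, ∀ n, ‖p k n‖ ≤ η * δ⁻¹ ^ n := by
    intro η hη
    obtain ⟨K, hK⟩ := hsmall η hη
    refine ⟨K, fun k hk n => ?_⟩
    have hsph : sphere (0:ℂ) δ ⊆ closedBall 0 δ := sphere_subset_closedBall
    have hsub : closedBall (0:ℂ) δ ⊆ closedBall 0 1 := closedBall_subset_closedBall hδ1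
    have := cauchy_coeff_bound (f k) δ hδ0 η
      ((hdiff k).continuousOn.mono (hsph.trans hsub))
      (fun w hw => hK k hk w (hsph hw)) n
    show ‖cauchyPowerSeries (f k) 0 1 n‖ ≤ η * δ⁻¹ ^ n
    rw [heqpq k]
    exact this
  -- terms of the series at t
  set S : ℕ → ℕ → E := fun k n => p k n fun _ => t with hSdef
  have hterm : ∀ k n (c : ℝ), ‖p k n‖ ≤ c → ‖S k n‖ ≤ c * ‖t‖ ^ n := by
    intro k n c hc
    have h1 : ‖S k n‖ ≤ ‖p k n‖ * ∏ _i : Fin n, ‖t‖ :=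
      (p k n).le_opNorm _
    have h2 : (∏ _i : Fin n, ‖t‖) = ‖t‖ ^ n := by
      simp [Finset.prod_const]
    rw [h2] at h1
    exact le_trans h1 (mul_le_mul_of_nonneg_right hc (by positivity))
  have hSsum : ∀ k, HasSum (S k) (f k t) := by
    intro k
    have hmem : t ∈ Metric.eball (0:ℂ) 1 := by
      rw [Metric.mem_eball, edist_zero_right, ← ofReal_norm]
      exact ENNReal.ofReal_lt_one.mpr ht
    have := (hp k).hasSum hmem
    simpa only [zero_add] using this
  -- tail bound
  have htail : ∀ k N, ‖f k t - ∑ n ∈ Finset.range N, S k n‖ ≤ C * ‖t‖ ^ N / (1 - ‖t‖) := by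
    intro k N
    have hsummable := (hSsum k).summable
    have hsplit := Summable.sum_add_tsum_nat_add N hsummable
    rw [(hSsum k).tsum_eq] at hsplit
    have hgoal : f k t - ∑ n ∈ Finset.range N, S k n = ∑' n, S k (n + N) := by
      rw [← hsplit]; abel
    rw [hgoal]
    have hgeom : HasSum (fun n : ℕ => C * ‖t‖ ^ N * ‖t‖ ^ n) (C * ‖t‖ ^ N * (1 - ‖t‖)⁻¹) :=
      (hasSum_geometric_of_lt_one (norm_nonneg t) ht).mul_left _
    have hgeom' : HasSum (fun n : ℕ => C * ‖t‖ ^ (n + N)) (C * ‖t‖ ^ N / (1 - ‖t‖)) := by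
      have : (fun n : ℕ => C * ‖t‖ ^ (n + N)) = fun n : ℕ => C * ‖t‖ ^ N * ‖t‖ ^ n := by
        funext n; rw [pow_add]; ring
      rw [this, div_eq_mul_inv]
      exact hgeom
    refine tsum_of_norm_bounded hgeom' fun n => ?_
    exact hterm k (n + N) C (hcoef_bd k (n + N))
  -- conclusion
  rw [Metric.tendsto_atTop]
  intro ε hε
  have h1t : 0 < 1 - ‖t‖ := by linarith
  -- choose N
  have htend : Tendsto (fun N : ℕ => C * ‖t‖ ^ N / (1 - ‖t‖)) atTop (nhds 0) := by
    have := tendsto_pow_atTop_nhds_zero_of_lt_one (norm_nonneg t) ht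
    have h2 := (this.const_mul C).div_const (1 - ‖t‖)
    simpa using h2
  obtain ⟨N, hN⟩ := (Metric.tendsto_atTop.mp htend (ε/3) (by linarith)).imp (fun N hN => hN N le_rfl)
  have hNtail : C * ‖t‖ ^ N / (1 - ‖t‖) < ε / 3 := by
    have := hN
    rw [Real.dist_eq] at this
    have hnn : 0 ≤ C * ‖t‖ ^ N / (1 - ‖t‖) := by positivity
    rwa [sub_zero, abs_of_nonneg hnn] at this
  -- choose K for head coefficients
  set η : ℝ := (ε / 3 / (N + 1)) * δ ^ N with hηdef
  have hηpos : 0 < η := by positivity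
  obtain ⟨K, hK⟩ := hcoef_small η hηpos
  refine ⟨K, fun k hk => ?_⟩
  rw [dist_zero_right]
  have hhead : ∀ n < N, ‖S k n‖ ≤ ε / 3 / (N + 1) := by
    intro n hn
    have h1 := hterm k n (η * δ⁻¹ ^ n) (hK k hk n)
    have hδinv : (1:ℝ) ≤ δ⁻¹ := (one_le_inv₀ hδ0).2 hδ1
    have h2 : δ⁻¹ ^ n ≤ δ⁻¹ ^ N := pow_le_pow_right₀ hδinv hn.le
    have h3 : η * δ⁻¹ ^ N = (ε / 3 / (N + 1)) * (δ ^ N * δ⁻¹ ^ N) := by rw [hηdef]; ring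
    have h4 : δ ^ N * δ⁻¹ ^ N = 1 := by
      rw [← mul_pow, mul_inv_cancel₀ hδ0.ne', one_pow]
    have htn : ‖t‖ ^ n ≤ 1 := pow_le_one₀ (norm_nonneg t) ht.le
    calc ‖S k n‖ ≤ η * δ⁻¹ ^ n * ‖t‖ ^ n := h1
      _ ≤ η * δ⁻¹ ^ n * 1 := by
          apply mul_le_mul_of_nonneg_left htn
          positivity
      _ = η * δ⁻¹ ^ n := mul_one _
      _ ≤ η * δ⁻¹ ^ N := by
          apply mul_le_mul_of_nonneg_left h2 hηpos.le
      _ = ε / 3 / (N + 1) := by rw [h3, h4, mul_one]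
  have hsum_head : ‖∑ n ∈ Finset.range N, S k n‖ ≤ N * (ε / 3 / (N + 1)) := by
    calc ‖∑ n ∈ Finset.range N, S k n‖ ≤ ∑ n ∈ Finset.range N, ‖S k n‖ := norm_sum_le _ _
      _ ≤ ∑ _n ∈ Finset.range N, (ε / 3 / (N + 1)) :=
          Finset.sum_le_sum fun n hn => hhead n (Finset.mem_range.mp hn)
      _ = N * (ε / 3 / (N + 1)) := by simp [mul_comm]
  have hfrac : (N:ℝ) * (ε / 3 / (N + 1)) ≤ ε / 3 := by
    have hpos : (0:ℝ) < (N:ℝ) + 1 := by positivity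
    have heq : (N:ℝ) * (ε / 3 / (N + 1)) = (ε / 3) * ((N:ℝ) / ((N:ℝ) + 1)) := by ring
    rw [heq]
    have h2 : (N:ℝ) / ((N:ℝ) + 1) ≤ 1 := by
      rw [div_le_one hpos]; linarith
    nlinarith [hε.le]
  calc ‖f k t‖ = ‖(f k t - ∑ n ∈ Finset.range N, S k n) + ∑ n ∈ Finset.range N, S k n‖ := by
        rw [sub_add_cancel]
    _ ≤ ‖f k t - ∑ n ∈ Finset.range N, S k n‖ + ‖∑ n ∈ Finset.range N, S k n‖ := norm_add_le _ _
    _ ≤ C * ‖t‖ ^ N / (1 - ‖t‖) + N * (ε / 3 / (N + 1)) := add_le_add (htail k N) hsum_head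
    _ < ε / 3 + ε / 3 := by
        apply add_lt_add_of_lt_of_le hNtail hfrac
    _ < ε := by linarith

theorem basin_boundary_in_julia (n : ℕ) (hn : 0 < n)
    (Hgen : Fin n → ℂ × ℂ → ℂ × ℂ) (hHenon : ∀ i, IsHenon (Hgen i))
    (r α : ℝ) (hr : 0 < r) (hα0 : 0 < α) (hα1 : α < 1)
    (hattr : ∀ i, ∀ z ∈ Metric.ball (0 : ℂ × ℂ) r, ‖Hgen i z‖ ≤ α * ‖z‖)
    (h : ℕ → ℂ × ℂ → ℂ × ℂ) (hmem : ∀ k, ∃ i, h k = Hgen i) :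
    frontier {z : ℂ × ℂ | Tendsto (fun k => compSeq h k z) atTop (nhds 0)} ⊆
      frontier {z : ℂ × ℂ | IsBounded (Set.range fun k => compSeq h k z)} := by
  set Ω : Set (ℂ × ℂ) := {z | Tendsto (fun k => compSeq h k z) atTop (nhds 0)} with hΩdef
  set Kb : Set (ℂ × ℂ) := {z | IsBounded (Set.range fun k => compSeq h k z)} with hKdef
  obtain ⟨R, hR1, hPR⟩ := exists_uniform_R n hn Hgen hHenon
  have hPk : ∀ k, 1 ≤ k → Pfilt R (h k) := by
    intro k _
    obtain ⟨i, hi⟩ := hmem k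
    rw [hi]; exact hPR i
  have hdiffh : ∀ k, 1 ≤ k → Differentiable ℂ (h k) := by
    intro k _
    obtain ⟨i, hi⟩ := hmem k
    rw [hi]; exact henon_diff (hHenon i)
  have hFdiff : ∀ k, Differentiable ℂ (compSeq h k) := compSeq_diff h hdiffh
  have hloc : ∀ z ∈ Ω, ∃ ε > 0, ∀ η > 0, ∃ K, ∀ k ≥ K, ∀ u ∈ ball z ε, ‖compSeq h k u‖ ≤ η :=
    fun z hz => basin_unif hr hα0 hα1 hattr h hmem hFdiff hz
  have hΩopen : IsOpen Ω := by
    rw [Metric.isOpen_iff]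
    intro z hz
    obtain ⟨ε, hε, hunif⟩ := hloc z hz
    refine ⟨ε, hε, fun u hu => ?_⟩
    show Tendsto (fun k => compSeq h k u) atTop (nhds 0)
    rw [Metric.tendsto_atTop]
    intro η hη
    obtain ⟨K, hK⟩ := hunif (η / 2) (by linarith)
    exact ⟨K, fun k hk => by
      rw [dist_zero_right]; exact lt_of_le_of_lt (hK k hk u hu) (by linarith)⟩
  have hΩK : Ω ⊆ Kb := by
    intro w hw
    exact (hw.cauchySeq).isBounded_range
  intro z hz
  have hzcl : z ∈ closure Ω := frontier_subset_closure hz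
  have hzΩ : z ∉ Ω := by
    intro hzin
    exact hz.2 (by rwa [hΩopen.interior_eq])
  refine ⟨closure_mono hΩK hzcl, ?_⟩
  intro hint
  -- closed ball inside Kb
  obtain ⟨ρ, hρ0, hρball⟩ : ∃ ρ > 0, ball z ρ ⊆ Kb := by
    obtain ⟨ρ, hρ0, hsub⟩ := Metric.isOpen_iff.mp isOpen_interior z hint
    exact ⟨ρ, hρ0, hsub.trans interior_subset⟩
  set ρ' : ℝ := ρ / 2 with hρ'def
  have hρ'0 : 0 < ρ' := by positivity
  have hcb : closedBall z ρ' ⊆ Kb := (closedBall_subset_ball (by linarith)).trans hρball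
  set C : ℝ := max (‖z‖ + ρ') R with hCdef
  have hC0 : (0:ℝ) ≤ C := le_trans (by linarith) (le_max_right _ _)
  have hCbd : ∀ u ∈ closedBall z ρ', ∀ k, ‖compSeq h k u‖ ≤ C := by
    intro u hu k
    have h1 := orbit_bound R hR1 h hPk u (hcb hu)
    have h2 : ‖u‖ ≤ ‖z‖ + ρ' := by
      have := mem_closedBall_iff_norm.mp hu
      calc ‖u‖ = ‖z + (u - z)‖ := by ring_nf
        _ ≤ ‖z‖ + ‖u - z‖ := norm_add_le _ _
        _ ≤ ‖z‖ + ρ' := by linarith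
    calc ‖compSeq h k u‖ ≤ max ‖u‖ R := h1 k
      _ ≤ max (‖z‖ + ρ') R := max_le_max_right _ h2
  -- nearby basin point
  obtain ⟨w, hwΩ, hwdist⟩ : ∃ w ∈ Ω, dist z w < ρ' / 3 :=
    Metric.mem_closure_iff.mp hzcl (ρ' / 3) (by positivity)
  obtain ⟨ε, hε0, hunif⟩ := hloc w hwΩ
  -- the analytic disk
  set φ : ℂ → ℂ × ℂ := fun ζ => w + (2 * ζ) • (z - w) with hφdef
  have hφmaps : ∀ ζ : ℂ, ‖ζ‖ ≤ 1 → φ ζ ∈ closedBall z ρ' := by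
    intro ζ hζ
    rw [mem_closedBall_iff_norm]
    have : φ ζ - z = (2 * ζ - 1) • (z - w) := by
      simp only [hφdef]; module
    rw [this, norm_smul]
    have h1 : ‖2 * ζ - 1‖ ≤ 3 := by
      calc ‖2 * ζ - 1‖ ≤ ‖2 * ζ‖ + ‖(1:ℂ)‖ := norm_sub_le _ _
        _ ≤ 2 * 1 + 1 := by
            rw [norm_mul]
            simp only [norm_one]
            have : ‖(2:ℂ)‖ = 2 := by norm_num
            rw [this]
            nlinarith
        _ = 3 := by norm_num
    have h2 : ‖z - w‖ ≤ ρ' / 3 := by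
      rw [← dist_eq_norm]
      exact hwdist.le
    calc ‖2 * ζ - 1‖ * ‖z - w‖ ≤ 3 * (ρ' / 3) :=
        mul_le_mul h1 h2 (norm_nonneg _) (by norm_num)
      _ = ρ' := by ring
  set g : ℕ → ℂ → ℂ × ℂ := fun k ζ => compSeq h k (φ ζ) with hgdef
  have hgdiff : ∀ k, DifferentiableOn ℂ (g k) (closedBall (0:ℂ) 1) := by
    intro k
    apply Differentiable.differentiableOn
    apply (hFdiff k).comp
    apply Differentiable.const_add
    exact (differentiable_id.const_mul (2:ℂ)).smul_const (z - w)
  have hgbd : ∀ k, ∀ ζ ∈ closedBall (0:ℂ) 1, ‖g k ζ‖ ≤ C := by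
    intro k ζ hζ
    exact hCbd (φ ζ) (hφmaps ζ (mem_closedBall_zero_iff.mp hζ)) k
  set δ : ℝ := min 1 (ε / (2 * (‖z - w‖ + 1))) with hδdef
  have hδ0 : 0 < δ := lt_min one_pos (by positivity)
  have hδ1 : δ ≤ 1 := min_le_left _ _
  have hφsmall : ∀ ζ : ℂ, ‖ζ‖ ≤ δ → φ ζ ∈ ball w ε := by
    intro ζ hζ
    rw [mem_ball_iff_norm]
    have : φ ζ - w = (2 * ζ) • (z - w) := by simp only [hφdef]; module
    rw [this, norm_smul, norm_mul]
    have h2 : ‖(2:ℂ)‖ = 2 := by norm_num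
    rw [h2]
    have h3 : ‖ζ‖ ≤ ε / (2 * (‖z - w‖ + 1)) := le_trans hζ (min_le_right _ _)
    have h4 : (0:ℝ) ≤ ‖z - w‖ := norm_nonneg _
    have h5 : (0:ℝ) < ‖z - w‖ + 1 := by positivity
    have key : 2 * (ε / (2 * (‖z - w‖ + 1))) * (‖z - w‖ + 1) = ε := by
      field_simp
    have h6 : 2 * ‖ζ‖ * (‖z - w‖ + 1) ≤ ε := by
      have := mul_le_mul_of_nonneg_right
        (mul_le_mul_of_nonneg_left h3 (by norm_num : (0:ℝ) ≤ 2)) h5.le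
      calc 2 * ‖ζ‖ * (‖z - w‖ + 1)
          ≤ 2 * (ε / (2 * (‖z - w‖ + 1))) * (‖z - w‖ + 1) := this
        _ = ε := key
    rcases eq_or_lt_of_le (norm_nonneg ζ) with h0 | h0
    · rw [← h0]
      simpa using hε0
    · nlinarith [h6, h4, h0]
  have hgsmall : ∀ η > 0, ∃ K, ∀ k ≥ K, ∀ ζ ∈ closedBall (0:ℂ) δ, ‖g k ζ‖ ≤ η := by
    intro η hη
    obtain ⟨K, hK⟩ := hunif η hη
    exact ⟨K, fun k hk ζ hζ =>
      hK k hk (φ ζ) (hφsmall ζ (mem_closedBall_zero_iff.mp hζ))⟩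
  have hth : ‖(1/2 : ℂ)‖ < 1 := by norm_num
  have hconv := vitali_disk g C δ hC0 hδ0 hδ1 hgdiff hgbd hgsmall (1/2) hth
  have hgz : ∀ k, g k (1/2) = compSeq h k z := by
    intro k
    have : φ (1/2) = z := by
      rw [hφdef]
      simp only
      norm_num
    rw [hgdef]; simp only; rw [this]
  have : Tendsto (fun k => compSeq h k z) atTop (nhds 0) := by
    have heq : (fun k => g k (1/2)) = fun k => compSeq h k z := funext hgz
    rwa [heq] at hconv
  exact hzΩ this
end
end
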